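/- Let (x_n)_{n∈I} be a frame with dual frame (z_n), and suppose T = I − Σ_{i=1}^k θ_{z_i, x_i} is invertible, where E = {1,...,k}. Then for all h ∈ H: Th = Σ_{n∈E^c} ⟨h, x_n⟩ z_n, and consequently h = Σ_{n∈E^c} ⟨h, x_n⟩ T⁻¹z_n. -/

import Mathlib

noncomputable section

variable {H : Type*} [NormedAddCommGroup H] [InnerProductSpace ℂ H] [CompleteSpace H]

/-- `(x n)_{n ∈ I}` is a frame for `H` with frame bounds `A`, `B`. -/
def IsFrameOn (x : ℕ → H) (I : Set ℕ) (A B : ℝ) : Prop :=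
  0 < A ∧ 0 < B ∧ ∀ h : H,
    Summable (fun n : I => ‖(inner ℂ (x n) h : ℂ)‖ ^ 2) ∧
    A * ‖h‖ ^ 2 ≤ ∑' n : I, ‖(inner ℂ (x n) h : ℂ)‖ ^ 2 ∧
    ∑' n : I, ‖(inner ℂ (x n) h : ℂ)‖ ^ 2 ≤ B * ‖h‖ ^ 2

/-- `(z n)_{n ∈ I}` is a dual frame of `(x n)_{n ∈ I}`. -/
def IsDualFrameOn (z x : ℕ → H) (I : Set ℕ) : Prop :=
  (∃ A B : ℝ, IsFrameOn z I A B) ∧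
  ∀ h : H, HasSum (fun n : I => (inner ℂ (x n) h : ℂ) • z n) h

/-- The rank-one operator `θ_{y,x} : h ↦ ⟨h, x⟩ y`. -/
def rankOne (y x : H) : H →L[ℂ] H := (innerSL ℂ x).smulRight y

/-- If `(z n)` is a dual frame of `(x n)_{n ∈ I}` and
`T = I − Σ_{i=1}^k θ_{z i, x i}` is invertible (`E = {1,…,k}`), then
`T h = Σ_{n ∈ I \ E} ⟨h, x n⟩ z n` and `h = Σ_{n ∈ I \ E} ⟨h, x n⟩ T⁻¹ z n`. -/
theorem stmt17 (x z : ℕ → H) (I : Set ℕ) (A B : ℝ) (hx : IsFrameOn x I A B)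
    (hz : IsDualFrameOn z x I) (k : ℕ)
    (hE : ((Finset.Icc 1 k : Finset ℕ) : Set ℕ) ⊂ I)
    (Tinv : H →L[ℂ] H)
    (hT₁ : Tinv.comp (ContinuousLinearMap.id ℂ H - ∑ i ∈ Finset.Icc 1 k, rankOne (z i) (x i)) =
      ContinuousLinearMap.id ℂ H)
    (hT₂ : (ContinuousLinearMap.id ℂ H - ∑ i ∈ Finset.Icc 1 k, rankOne (z i) (x i)).comp Tinv =
      ContinuousLinearMap.id ℂ H) :
    ∀ h : H,
      HasSum (fun n : (I \ ((Finset.Icc 1 k : Finset ℕ) : Set ℕ) : Set ℕ) =>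
        (inner ℂ (x n) h : ℂ) • z n)
        ((ContinuousLinearMap.id ℂ H - ∑ i ∈ Finset.Icc 1 k, rankOne (z i) (x i)) h) ∧
      HasSum (fun n : (I \ ((Finset.Icc 1 k : Finset ℕ) : Set ℕ) : Set ℕ) =>
        (inner ℂ (x n) h : ℂ) • Tinv (z n)) h := by
  intro h
  set E : Set ℕ := ((Finset.Icc 1 k : Finset ℕ) : Set ℕ)
  set f : ℕ → H := fun n => (inner ℂ (x n) h : ℂ) • z n
  have hIsum : HasSum (I.indicator f) h := by
    rw [← hasSum_subtype_iff_indicator]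
    exact hz.2 h
  have hEsum : HasSum (E.indicator f) (∑ i ∈ Finset.Icc 1 k, f i) := by
    have heq : ∑ i ∈ Finset.Icc 1 k, E.indicator f i = ∑ i ∈ Finset.Icc 1 k, f i :=
      Finset.sum_congr rfl fun i hi => Set.indicator_of_mem (by simpa [E] using hi) f
    rw [← heq]
    exact hasSum_sum_of_ne_finset_zero fun n hn =>
      Set.indicator_of_notMem (by simpa [E] using hn) f
  have hind : (I \ E).indicator f = I.indicator f - E.indicator f := by
    funext n
    by_cases hnE : n ∈ E
    · have hnI : n ∈ I := hE.subset hnE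
      simp [Set.indicator_apply, hnE, hnI, Set.mem_diff]
    · by_cases hnI : n ∈ I <;> simp [Set.indicator_apply, hnE, hnI, Set.mem_diff]
  have key : HasSum ((I \ E).indicator f) (h - ∑ i ∈ Finset.Icc 1 k, f i) := by
    rw [hind]; exact hIsum.sub hEsum
  have hTval : ((ContinuousLinearMap.id ℂ H - ∑ i ∈ Finset.Icc 1 k, rankOne (z i) (x i)) h)
      = h - ∑ i ∈ Finset.Icc 1 k, f i := by
    simp [rankOne, f, ContinuousLinearMap.sum_apply]
  have h1 : HasSum (fun n : (I \ E : Set ℕ) => f n)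
      ((ContinuousLinearMap.id ℂ H - ∑ i ∈ Finset.Icc 1 k, rankOne (z i) (x i)) h) := by
    rw [hTval]; exact hasSum_subtype_iff_indicator.mpr key
  refine ⟨h1, ?_⟩
  have h2 := h1.mapL Tinv
  have hid : Tinv ((ContinuousLinearMap.id ℂ H - ∑ i ∈ Finset.Icc 1 k, rankOne (z i) (x i)) h)
      = h := by
    have := congrArg (fun T : H →L[ℂ] H => T h) hT₁
    simpa using this
  rw [hid] at h2
  simpa [f] using h2

end
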